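/- Suppose (x_j, f_j) is a shrinking Schauder frame for X and W is an associated space of (x_j, f_j) with shrinking associated basis (w_j). Then there exists an increasing sequence (N_k) satisfying Proposition 3.1 such that the corresponding basis (z_j) of Z_{(N_k)} is dominated by (w_j): there exists K ≥ 1 with ‖∑ a_j z_j‖_{(N_k)} ≤ K ‖∑ a_j w_j‖ for all finitely supported (a_j). -/
import Mathlib


open Filter Finset

/-- Theorem 4.1: if `W` is an associated space with shrinking associated
basis `(w_j)`, then for some `(N_k)` satisfying Proposition 3.1, the basis of `Z_{(N_k)}`
is dominated by `(w_j)`. -/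
theorem stmt_12 (X W : Type*) [NormedAddCommGroup X] [NormedSpace ℝ X] [CompleteSpace X]
    [NormedAddCommGroup W] [NormedSpace ℝ W] [CompleteSpace W]
    (x : ℕ → X) (f : ℕ → X →L[ℝ] ℝ)
    (hframe : ∀ v : X, Tendsto (fun n => ∑ i ∈ Finset.range n, f i v • x i) atTop (nhds v))
    (hshrink : ∀ g : X →L[ℝ] ℝ,
      Tendsto (fun n => ∑ i ∈ Finset.range n, g (x i) • f i) atTop (nhds g))
    (w : ℕ → W) (wstar : ℕ → W →L[ℝ] ℝ)
    (hbi : ∀ i j, wstar i (w j) = if i = j then 1 else 0)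
    (hbasis : ∀ v : W,
      Tendsto (fun n => ∑ i ∈ Finset.range n, wstar i v • w i) atTop (nhds v))
    (hwshrinking : ∀ g : W →L[ℝ] ℝ,
      Tendsto (fun n => ∑ i ∈ Finset.range n, g (w i) • wstar i) atTop (nhds g))
    (T : X →L[ℝ] W) (S : W →L[ℝ] X)
    (hT : ∀ v : X, Tendsto (fun n => ∑ i ∈ Finset.range n, f i v • w i) atTop (nhds (T v)))
    (hS : ∀ i, S (w i) = x i) :
    ∃ N : ℕ → ℕ, StrictMono N ∧
      (∀ k m₀ n₀ m n : ℕ, m₀ ≤ n₀ → n₀ ≤ k → N k ≤ m → m ≤ n → ∀ v : X,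
        ‖∑ j ∈ Finset.Icc m₀ n₀, f j (∑ i ∈ Finset.Icc m n, f i v • x i) • x j‖
          ≤ (2 : ℝ)⁻¹ ^ k * ‖v‖) ∧
      ∃ K : ℝ, 1 ≤ K ∧ ∀ (a : ℕ → ℝ) (s : Finset ℕ), (∀ i ∉ s, a i = 0) →
        max (sSup {r : ℝ | ∃ m n : ℕ, m ≤ n ∧ r = ‖∑ i ∈ Finset.Icc m n, a i • x i‖})
          (sSup {r : ℝ | ∃ k m₀ n₀ m n : ℕ, m₀ ≤ n₀ ∧ n₀ ≤ k ∧ N k ≤ m ∧ m ≤ n ∧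
            r = (2 : ℝ) ^ k *
              ‖∑ j ∈ Finset.Icc m₀ n₀, f j (∑ i ∈ Finset.Icc m n, a i • x i) • x j‖})
        ≤ K * ‖∑ i ∈ s, a i • w i‖ := by
  classical
  -- the "tail" functionals
  set R : ℕ → ℕ → ℕ → (W →L[ℝ] ℝ) := fun j m n => ∑ i ∈ Icc m n, f j (x i) • wstar i with hRdef
  -- tail smallness for a single j
  have tail : ∀ j : ℕ, ∀ ε : ℝ, 0 < ε → ∃ M : ℕ, ∀ m, M ≤ m → ∀ n, m ≤ n →
      ‖R j m n‖ ≤ ε := by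
    intro j ε hε
    have hg : Tendsto (fun n => ∑ i ∈ Finset.range n, ((f j).comp S) (w i) • wstar i)
        atTop (nhds ((f j).comp S)) := hwshrinking ((f j).comp S)
    rw [Metric.tendsto_atTop] at hg
    obtain ⟨M, hM⟩ := hg (ε / 2) (by positivity)
    refine ⟨M, fun m hm n hn => ?_⟩
    have h1 := hM m hm
    have h2 := hM (n + 1) (by omega)
    rw [dist_eq_norm] at h1 h2
    have hsw : ∀ i, ((f j).comp S) (w i) = f j (x i) := by
      intro i; simp [ContinuousLinearMap.comp_apply, hS]
    have hEq : R j m n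
        = (∑ i ∈ Finset.range (n + 1), ((f j).comp S) (w i) • wstar i)
          - ∑ i ∈ Finset.range m, ((f j).comp S) (w i) • wstar i := by
      rw [hRdef]
      simp only [hsw]
      rw [← Finset.Ico_add_one_right_eq_Icc, Finset.sum_Ico_eq_sub _ (by omega)]
    rw [hEq]
    have : (∑ i ∈ Finset.range (n + 1), ((f j).comp S) (w i) • wstar i)
          - ∑ i ∈ Finset.range m, ((f j).comp S) (w i) • wstar i
        = ((∑ i ∈ Finset.range (n + 1), ((f j).comp S) (w i) • wstar i) - (f j).comp S)
          - ((∑ i ∈ Finset.range m, ((f j).comp S) (w i) • wstar i) - (f j).comp S) := by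
      abel
    rw [this]
    calc _ ≤ ‖(∑ i ∈ Finset.range (n + 1), ((f j).comp S) (w i) • wstar i) - (f j).comp S‖
          + ‖(∑ i ∈ Finset.range m, ((f j).comp S) (w i) • wstar i) - (f j).comp S‖ :=
        norm_sub_le _ _
      _ ≤ ε / 2 + ε / 2 := add_le_add h2.le h1.le
      _ = ε := by ring
  -- the quantity controlled by the N_k
  set D : ℕ → ℕ → ℕ → ℝ := fun k m n => ∑ j ∈ Finset.range (k + 1), ‖R j m n‖ * ‖x j‖
    with hDdef
  set ε : ℕ → ℝ := fun k => (2 : ℝ)⁻¹ ^ k / max 1 ‖T‖ with hεdef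
  have hε_pos : ∀ k, 0 < ε k := by
    intro k
    apply div_pos (by positivity)
    exact lt_of_lt_of_le one_pos (le_max_left _ _)
  -- existence of good cut-offs
  have hexists : ∀ k : ℕ, ∃ M : ℕ, ∀ m, M ≤ m → ∀ n, m ≤ n → D k m n ≤ ε k := by
    intro k
    set B : ℝ := (∑ j ∈ Finset.range (k + 1), ‖x j‖) + 1 with hBdef
    have hB : 0 < B := by positivity
    have hchoice : ∀ j : ℕ, ∃ M : ℕ, ∀ m, M ≤ m → ∀ n, m ≤ n →
        ‖R j m n‖ ≤ ε k / B := fun j => tail j _ (div_pos (hε_pos k) hB)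
    choose M hM using hchoice
    refine ⟨(Finset.range (k + 1)).sup M, fun m hm n hn => ?_⟩
    have hbound : ∀ j ∈ Finset.range (k + 1), ‖R j m n‖ * ‖x j‖ ≤ (ε k / B) * ‖x j‖ := by
      intro j hj
      exact mul_le_mul_of_nonneg_right
        (hM j m (le_trans (Finset.le_sup hj) hm) n hn) (norm_nonneg _)
    calc D k m n ≤ ∑ j ∈ Finset.range (k + 1), (ε k / B) * ‖x j‖ :=
          Finset.sum_le_sum hbound
      _ = (ε k / B) * ∑ j ∈ Finset.range (k + 1), ‖x j‖ := by rw [Finset.mul_sum]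
      _ ≤ (ε k / B) * B := by
          apply mul_le_mul_of_nonneg_left _ (le_of_lt (div_pos (hε_pos k) hB))
          rw [hBdef]; linarith
      _ = ε k := div_mul_cancel₀ _ (ne_of_gt hB)
  -- build a strictly monotone sequence
  choose M₀ hM₀ using hexists
  set N : ℕ → ℕ := fun k => Nat.rec (M₀ 0) (fun k ih => max (ih + 1) (M₀ (k + 1))) k
    with hNdef
  have hNsucc : ∀ k, N (k + 1) = max (N k + 1) (M₀ (k + 1)) := fun k => rfl
  have hNmono : StrictMono N := by
    apply strictMono_nat_of_lt_succ
    intro k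
    rw [hNsucc]
    exact lt_of_lt_of_le (Nat.lt_succ_self _) (le_max_left _ _)
  have hNge : ∀ k, M₀ k ≤ N k := by
    intro k
    cases k with
    | zero => exact le_refl _
    | succ k => rw [hNsucc]; exact le_max_right _ _
  have hN : ∀ k, ∀ m, N k ≤ m → ∀ n, m ≤ n → D k m n ≤ ε k := by
    intro k m hm n hn
    exact hM₀ k m (le_trans (hNge k) hm) n hn
  -- key algebraic identity
  have key : ∀ (j m n : ℕ) (c : ℕ → ℝ) (u : W), (∀ i, wstar i u = c i) →
      f j (∑ i ∈ Finset.Icc m n, c i • x i) = R j m n u := by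
    intro j m n c u hcu
    rw [hRdef]
    simp only [map_sum, map_smul, ContinuousLinearMap.sum_apply,
      ContinuousLinearMap.smul_apply, hcu]
    simp only [smul_eq_mul]
    exact Finset.sum_congr rfl fun i _ => mul_comm _ _
  -- norm estimate from the identity
  have norm_est : ∀ (m₀ n₀ k m n : ℕ), n₀ ≤ k → (c : ℕ → ℝ) → ∀ u : W,
      (∀ i, wstar i u = c i) →
      ‖∑ j ∈ Finset.Icc m₀ n₀, f j (∑ i ∈ Finset.Icc m n, c i • x i) • x j‖
        ≤ D k m n * ‖u‖ := by
    intro m₀ n₀ k m n hn₀ c u hcu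
    calc ‖∑ j ∈ Finset.Icc m₀ n₀, f j (∑ i ∈ Finset.Icc m n, c i • x i) • x j‖
        ≤ ∑ j ∈ Finset.Icc m₀ n₀, ‖f j (∑ i ∈ Finset.Icc m n, c i • x i) • x j‖ :=
          norm_sum_le _ _
      _ ≤ ∑ j ∈ Finset.Icc m₀ n₀, (‖R j m n‖ * ‖x j‖) * ‖u‖ := by
          apply Finset.sum_le_sum
          intro j _
          rw [norm_smul, key j m n c u hcu]
          calc ‖R j m n u‖ * ‖x j‖ ≤ (‖R j m n‖ * ‖u‖) * ‖x j‖ :=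
                mul_le_mul_of_nonneg_right ((R j m n).le_opNorm u) (norm_nonneg _)
            _ = (‖R j m n‖ * ‖x j‖) * ‖u‖ := by ring
      _ = (∑ j ∈ Finset.Icc m₀ n₀, ‖R j m n‖ * ‖x j‖) * ‖u‖ := by
          rw [Finset.sum_mul]
      _ ≤ D k m n * ‖u‖ := by
          apply mul_le_mul_of_nonneg_right _ (norm_nonneg _)
          rw [hDdef]
          apply Finset.sum_le_sum_of_subset_of_nonneg
          · intro j hj
            rw [Finset.mem_Icc] at hj
            rw [Finset.mem_range]
            omega
          · intro j _ _
            positivity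
  -- coefficient identity for T v
  have hwT : ∀ (v : X) (i : ℕ), wstar i (T v) = f i v := by
    intro v i
    have h1 : Tendsto (fun n => wstar i (∑ j ∈ Finset.range n, f j v • w j)) atTop
        (nhds (wstar i (T v))) := ((wstar i).continuous.tendsto _).comp (hT v)
    have h2 : ∀ n, i < n → wstar i (∑ j ∈ Finset.range n, f j v • w j) = f i v := by
      intro n hn
      rw [map_sum]
      simp only [map_smul, smul_eq_mul, hbi]
      rw [Finset.sum_eq_single i]
      · simp
      · intro j _ hj
        simp [Ne.symm hj]
      · intro h; exact absurd (Finset.mem_range.mpr hn) h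
    have h3 : Tendsto (fun _ : ℕ => f i v) atTop (nhds (wstar i (T v))) := by
      apply h1.congr'
      filter_upwards [eventually_ge_atTop (i + 1)] with n hn
      exact h2 n (by omega)
    exact tendsto_nhds_unique h3 tendsto_const_nhds
  refine ⟨N, hNmono, ?_, ?_⟩
  · -- Proposition 3.1 estimate
    intro k m₀ n₀ m n hm₀ hn₀ hm hn v
    calc ‖∑ j ∈ Finset.Icc m₀ n₀, f j (∑ i ∈ Finset.Icc m n, f i v • x i) • x j‖
        ≤ D k m n * ‖T v‖ := norm_est m₀ n₀ k m n hn₀ (fun i => f i v) (T v) (hwT v)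
      _ ≤ ε k * (‖T‖ * ‖v‖) := by
          apply mul_le_mul (hN k m hm n hn) (T.le_opNorm v) (norm_nonneg _)
            (le_of_lt (hε_pos k))
      _ ≤ (2 : ℝ)⁻¹ ^ k * ‖v‖ := by
          rw [hεdef]
          have hT1 : (0:ℝ) < max 1 ‖T‖ := lt_of_lt_of_le one_pos (le_max_left _ _)
          have h2 : ‖T‖ ≤ max 1 ‖T‖ := le_max_right _ _
          have h3 : (0:ℝ) ≤ (2 : ℝ)⁻¹ ^ k := by positivity
          rw [div_mul_eq_mul_div, mul_comm ‖T‖ ‖v‖, ← mul_assoc, mul_div_assoc]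
          have h4 : ‖T‖ / max 1 ‖T‖ ≤ 1 := by rw [div_le_one hT1]; exact h2
          calc (2 : ℝ)⁻¹ ^ k * ‖v‖ * (‖T‖ / max 1 ‖T‖) ≤ (2 : ℝ)⁻¹ ^ k * ‖v‖ * 1 :=
              mul_le_mul_of_nonneg_left h4 (by positivity)
            _ = (2 : ℝ)⁻¹ ^ k * ‖v‖ := mul_one _
  · -- domination
    -- basis projections on W
    set Q : ℕ → W →L[ℝ] W := fun n => ∑ i ∈ Finset.range n, (wstar i).smulRight (w i)
      with hQdef
    have hQapply : ∀ (n : ℕ) (u : W), Q n u = ∑ i ∈ Finset.range n, wstar i u • w i := by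
      intro n u
      rw [hQdef]
      simp [ContinuousLinearMap.sum_apply, ContinuousLinearMap.smulRight_apply]
    have hQbdd : ∃ C, ∀ n, ‖Q n‖ ≤ C := by
      apply banach_steinhaus
      intro u
      have : Bornology.IsBounded (Set.range fun n => Q n u) :=
        Metric.isBounded_range_of_tendsto _
          ((hbasis u).congr fun n => (hQapply n u).symm)
      obtain ⟨C, hC⟩ := isBounded_iff_forall_norm_le.mp this
      exact ⟨C, fun n => hC _ ⟨n, rfl⟩⟩
    obtain ⟨C, hC⟩ := hQbdd
    have hC0 : 0 ≤ C := le_trans (norm_nonneg _) (hC 0)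
    refine ⟨max 1 (2 * C * ‖S‖), le_max_left _ _, ?_⟩
    intro a s ha
    set u : W := ∑ i ∈ s, a i • w i with hu
    set K : ℝ := max 1 (2 * C * ‖S‖) with hK
    have hK1 : (1:ℝ) ≤ K := le_max_left _ _
    have hau : ∀ i, wstar i u = a i := by
      intro i
      rw [hu, map_sum]
      simp only [map_smul, smul_eq_mul, hbi]
      by_cases hi : i ∈ s
      · rw [Finset.sum_eq_single i]
        · simp
        · intro j _ hj; simp [Ne.symm hj]
        · intro h; exact absurd hi h
      · rw [ha i hi]
        apply Finset.sum_eq_zero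
        intro j hj
        have : i ≠ j := by rintro rfl; exact hi hj
        simp [this]
    have hsum_eq : ∀ m n : ℕ, m ≤ n →
        (∑ i ∈ Finset.Icc m n, a i • x i) = S (Q (n + 1) u - Q m u) := by
      intro m n hmn
      rw [map_sub]
      have : ∀ p : ℕ, S (Q p u) = ∑ i ∈ Finset.range p, a i • x i := by
        intro p
        rw [hQapply, map_sum]
        simp only [map_smul, hS, hau]
      rw [this, this, ← Finset.sum_Ico_eq_sub _ (by omega), Finset.Ico_add_one_right_eq_Icc]
    have hQu_norm : ∀ m n : ℕ, ‖Q (n + 1) u - Q m u‖ ≤ 2 * C * ‖u‖ := by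
      intro m n
      calc ‖Q (n + 1) u - Q m u‖ ≤ ‖Q (n + 1) u‖ + ‖Q m u‖ := norm_sub_le _ _
        _ ≤ ‖Q (n + 1)‖ * ‖u‖ + ‖Q m‖ * ‖u‖ :=
            add_le_add ((Q (n + 1)).le_opNorm u) ((Q m).le_opNorm u)
        _ ≤ C * ‖u‖ + C * ‖u‖ := by
            apply add_le_add <;>
              exact mul_le_mul_of_nonneg_right (hC _) (norm_nonneg _)
        _ = 2 * C * ‖u‖ := by ring
    have hKu : 0 ≤ K * ‖u‖ := mul_nonneg (le_trans zero_le_one hK1) (norm_nonneg _)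
    apply max_le
    · -- first supremum
      apply Real.sSup_le _ hKu
      rintro r ⟨m, n, hmn, rfl⟩
      rw [hsum_eq m n hmn]
      calc ‖S (Q (n + 1) u - Q m u)‖ ≤ ‖S‖ * ‖Q (n + 1) u - Q m u‖ := S.le_opNorm _
        _ ≤ ‖S‖ * (2 * C * ‖u‖) :=
            mul_le_mul_of_nonneg_left (hQu_norm m n) (norm_nonneg _)
        _ = (2 * C * ‖S‖) * ‖u‖ := by ring
        _ ≤ K * ‖u‖ :=
            mul_le_mul_of_nonneg_right (le_max_right _ _) (norm_nonneg _)
    · -- second supremum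
      apply Real.sSup_le _ hKu
      rintro r ⟨k, m₀, n₀, m, n, hm₀, hn₀, hm, hn, rfl⟩
      have h1 : ‖∑ j ∈ Finset.Icc m₀ n₀, f j (∑ i ∈ Finset.Icc m n, a i • x i) • x j‖
          ≤ D k m n * ‖u‖ := norm_est m₀ n₀ k m n hn₀ a u hau
      have h2 : D k m n ≤ ε k := hN k m hm n hn
      have h3 : ε k ≤ (2 : ℝ)⁻¹ ^ k := by
        rw [hεdef]
        apply div_le_of_le_mul₀ (le_trans zero_le_one (le_max_left _ _)) (by positivity)
        calc (2 : ℝ)⁻¹ ^ k = (2 : ℝ)⁻¹ ^ k * 1 := by ring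
          _ ≤ (2 : ℝ)⁻¹ ^ k * max 1 ‖T‖ := by
              apply mul_le_mul_of_nonneg_left (le_max_left _ _) (by positivity)
      calc (2 : ℝ) ^ k * ‖∑ j ∈ Finset.Icc m₀ n₀,
              f j (∑ i ∈ Finset.Icc m n, a i • x i) • x j‖
          ≤ (2 : ℝ) ^ k * ((2 : ℝ)⁻¹ ^ k * ‖u‖) := by
            apply mul_le_mul_of_nonneg_left _ (by positivity)
            calc _ ≤ D k m n * ‖u‖ := h1
              _ ≤ (2 : ℝ)⁻¹ ^ k * ‖u‖ :=
                  mul_le_mul_of_nonneg_right (le_trans h2 h3) (norm_nonneg _)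
        _ = ‖u‖ := by
            rw [← mul_assoc, ← mul_pow]
            norm_num
        _ ≤ K * ‖u‖ := by
            nlinarith [norm_nonneg u]
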